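/- Let T and T_h be bounded linear operators from X to Y, α > 0, i ≥ 1, and let x† ∈ X with y := Q y for Q the orthogonal projector onto the closure of Range(T), so that Q y = T x†. Let Q_h be the orthogonal projector onto the closure of Range(T_h). Define x_{α,i} := ∑_{k=1}^i α^{k-1}(T*T+αI)^{-k} T* y and x_{α,i}^h := ∑_{k=1}^i α^{k-1}(T_h*T_h+αI)^{-k} T_h* y. Then ‖x_{α,i} − x_{α,i}^h‖ ≤ i(i+1)‖T−T_h‖‖x†‖/(2√α) + i‖Q_h(I−Q)y‖/(2√α). -/

import Mathlib

open ContinuousLinearMap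

section Aux

variable {X Y : Type*} [NormedAddCommGroup X] [InnerProductSpace ℝ X] [CompleteSpace X]
  [NormedAddCommGroup Y] [InnerProductSpace ℝ Y] [CompleteSpace Y]

lemma myadj_norm (S : X →L[ℝ] Y) : ‖adjoint S‖ = ‖S‖ :=
  LinearIsometryEquiv.norm_map ContinuousLinearMap.adjoint S

lemma ptA {T : X →L[ℝ] Y} {α : ℝ} {B : X →L[ℝ] X}
    (h : (adjoint T ∘L T + α • 1) * B = 1) (x : X) :
    adjoint T (T (B x)) + α • B x = x := by
  have := ContinuousLinearMap.ext_iff.mp h x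
  simpa [ContinuousLinearMap.mul_apply] using this

lemma ptB {T : X →L[ℝ] Y} {α : ℝ} {B : X →L[ℝ] X}
    (h : B * (adjoint T ∘L T + α • 1) = 1) (x : X) :
    B (adjoint T (T x)) + α • B x = x := by
  have := ContinuousLinearMap.ext_iff.mp h x
  simpa [ContinuousLinearMap.mul_apply, map_add, map_smul] using this

lemma keyId {T : X →L[ℝ] Y} {α : ℝ} {B : X →L[ℝ] X}
    (h : (adjoint T ∘L T + α • 1) * B = 1) (x : X) :
    ‖T (B x)‖ ^ 2 + α * ‖B x‖ ^ 2 = (inner ℝ x (B x) : ℝ) := by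
  have e : (inner ℝ x (B x) : ℝ) = inner ℝ (adjoint T (T (B x)) + α • B x) (B x) :=
    congrArg (fun w => (inner ℝ w (B x) : ℝ)) (ptA h x).symm
  rw [e, inner_add_left, real_inner_smul_left, adjoint_inner_left,
    real_inner_self_eq_norm_sq, real_inner_self_eq_norm_sq]


lemma bnd1 {T : X →L[ℝ] Y} {α : ℝ} (hα : 0 < α) {B : X →L[ℝ] X}
    (h : (adjoint T ∘L T + α • 1) * B = 1) (x : X) :
    ‖α • B x‖ ≤ ‖x‖ := by
  have k := keyId h x
  have hi : (inner ℝ x (B x) : ℝ) ≤ ‖x‖ * ‖B x‖ := real_inner_le_norm x (B x)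
  rw [norm_smul, Real.norm_eq_abs, abs_of_pos hα]
  rcases eq_or_lt_of_le (norm_nonneg (B x)) with h0 | h0
  · rw [← h0]; simpa using norm_nonneg x
  · have : α * ‖B x‖ * ‖B x‖ ≤ ‖x‖ * ‖B x‖ := by
      nlinarith [sq_nonneg (‖T (B x)‖)]
    exact le_of_mul_le_mul_right this h0

lemma bnd2 {T : X →L[ℝ] Y} {α : ℝ} (hα : 0 < α) {B : X →L[ℝ] X}
    (h : (adjoint T ∘L T + α • 1) * B = 1) (z : Y) :
    ‖B (adjoint T z)‖ ≤ ‖z‖ / (2 * Real.sqrt α) := by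
  have k := keyId h (adjoint T z)
  rw [adjoint_inner_left] at k
  have hi : (inner ℝ z (T (B (adjoint T z))) : ℝ) ≤ ‖z‖ * ‖T (B (adjoint T z))‖ :=
    real_inner_le_norm _ _
  set u := B (adjoint T z) with hu
  set s := Real.sqrt α with hs
  have hs0 : 0 < s := Real.sqrt_pos.mpr hα
  have hs2 : s ^ 2 = α := Real.sq_sqrt hα.le
  have h2 : ‖u‖ ^ 2 ≤ (‖z‖ / (2 * s)) ^ 2 := by
    rw [div_pow]
    rw [le_div_iff₀ (by positivity)]
    nlinarith [sq_nonneg (‖z‖ - 2 * ‖T u‖)]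
  calc ‖u‖ = Real.sqrt (‖u‖ ^ 2) := (Real.sqrt_sq (norm_nonneg u)).symm
    _ ≤ Real.sqrt ((‖z‖ / (2 * s)) ^ 2) := Real.sqrt_le_sqrt h2
    _ = ‖z‖ / (2 * s) := Real.sqrt_sq (by positivity)

lemma bnd3 {T : X →L[ℝ] Y} {α : ℝ} (hα : 0 < α) {B : X →L[ℝ] X}
    (h : (adjoint T ∘L T + α • 1) * B = 1) (x : X) :
    ‖T (B x)‖ ≤ ‖x‖ / (2 * Real.sqrt α) := by
  have k := keyId h x
  have hi : (inner ℝ x (B x) : ℝ) ≤ ‖x‖ * ‖B x‖ := real_inner_le_norm _ _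
  set s := Real.sqrt α with hs
  have hs0 : 0 < s := Real.sqrt_pos.mpr hα
  have hs2 : s ^ 2 = α := Real.sq_sqrt hα.le
  have h2 : ‖T (B x)‖ ^ 2 ≤ (‖x‖ / (2 * s)) ^ 2 := by
    rw [div_pow]
    rw [le_div_iff₀ (by positivity)]
    nlinarith [sq_nonneg (‖x‖ - 2 * α * ‖B x‖)]
  calc ‖T (B x)‖ = Real.sqrt (‖T (B x)‖ ^ 2) := (Real.sqrt_sq (norm_nonneg _)).symm
    _ ≤ Real.sqrt ((‖x‖ / (2 * s)) ^ 2) := Real.sqrt_le_sqrt h2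
    _ = ‖x‖ / (2 * s) := Real.sqrt_sq (by positivity)

lemma bnd4 {T : X →L[ℝ] Y} {α : ℝ} (hα : 0 < α) {B : X →L[ℝ] X}
    (h₁ : B * (adjoint T ∘L T + α • 1) = 1)
    (h₂ : (adjoint T ∘L T + α • 1) * B = 1) (x : X) :
    ‖B (adjoint T (T x))‖ ≤ ‖x‖ := by
  have e1 := ptB h₁ x
  have e2 := ptA h₂ x
  have e3 : B (adjoint T (T x)) = adjoint T (T (B x)) :=
    (eq_sub_of_add_eq e1).trans (eq_sub_of_add_eq e2).symm
  rw [e3]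
  have e4 : ‖x‖ ^ 2 = ‖adjoint T (T (B x))‖ ^ 2 + 2 * (α * ‖T (B x)‖ ^ 2)
      + α ^ 2 * ‖B x‖ ^ 2 := by
    conv_lhs => rw [← e2]
    rw [norm_add_sq_real, real_inner_smul_right, adjoint_inner_left,
      real_inner_self_eq_norm_sq, norm_smul, Real.norm_eq_abs, mul_pow, sq_abs]
  have h2 : ‖adjoint T (T (B x))‖ ^ 2 ≤ ‖x‖ ^ 2 := by
    nlinarith [sq_nonneg (‖T (B x)‖), sq_nonneg ‖B x‖, sq_nonneg α, hα.le]
  calc ‖adjoint T (T (B x))‖ = Real.sqrt (‖adjoint T (T (B x))‖ ^ 2) :=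
      (Real.sqrt_sq (norm_nonneg _)).symm
    _ ≤ Real.sqrt (‖x‖ ^ 2) := Real.sqrt_le_sqrt h2
    _ = ‖x‖ := Real.sqrt_sq (norm_nonneg _)


lemma powB {T : X →L[ℝ] Y} {α : ℝ} (hα : 0 < α) {B : X →L[ℝ] X}
    (h : (adjoint T ∘L T + α • 1) * B = 1) :
    ∀ (k : ℕ) (x : X), ‖α ^ k • (B ^ k) x‖ ≤ ‖x‖ := by
  intro k
  induction k with
  | zero => intro x; simp
  | succ k ih =>
    intro x
    have e : α ^ (k + 1) • (B ^ (k + 1)) x = α ^ k • (B ^ k) (α • B x) := by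
      rw [pow_succ B, ContinuousLinearMap.mul_apply, map_smul, smul_smul, pow_succ]
    rw [e]
    exact (ih (α • B x)).trans (bnd1 hα h x)

lemma diffId {T Th : X →L[ℝ] Y} {α : ℝ} {B Bh : X →L[ℝ] X}
    (hB₂ : (adjoint T ∘L T + α • 1) * B = 1)
    (hBh₁ : Bh * (adjoint Th ∘L Th + α • 1) = 1) (w : X) :
    B w - Bh w = Bh (adjoint Th ((Th - T) (B w))) + Bh ((adjoint (Th - T)) (T (B w))) := by
  have e2 := ptA hB₂ w
  have e3 : Bh w = Bh (adjoint T (T (B w))) + α • Bh (B w) := by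
    have h' := congrArg Bh e2
    simp only [map_add, map_smul] at h'
    exact h'.symm
  have e1 := ptB hBh₁ (B w)
  have hsub : adjoint (Th - T) = adjoint Th - adjoint T := map_sub _ _ _
  simp only [hsub, ContinuousLinearMap.sub_apply, map_sub]
  set a := Bh (adjoint Th (Th (B w))) with ha
  set c := Bh (adjoint T (T (B w))) with hc
  rw [← e1, e3]
  abel

lemma E1 {T Th : X →L[ℝ] Y} {α : ℝ} (hα : 0 < α) {B Bh : X →L[ℝ] X}
    (hB₂ : (adjoint T ∘L T + α • 1) * B = 1)
    (hBh₁ : Bh * (adjoint Th ∘L Th + α • 1) = 1)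
    (hBh₂ : (adjoint Th ∘L Th + α • 1) * Bh = 1) :
    ∀ (k : ℕ) (w : X), ‖α ^ k • ((B ^ k) w - (Bh ^ k) w)‖ ≤
      (k : ℝ) * (‖Th - T‖ * ‖w‖) / Real.sqrt α := by
  intro k
  induction k with
  | zero => intro w; simp
  | succ k ih =>
    intro w
    set s := Real.sqrt α with hs
    have hs0 : 0 < s := Real.sqrt_pos.mpr hα
    set p := (B ^ k) w with hp
    have dec : α ^ (k + 1) • ((B ^ (k + 1)) w - (Bh ^ (k + 1)) w) =
        α ^ (k + 1) • (B p - Bh p) + α • Bh (α ^ k • ((B ^ k) w - (Bh ^ k) w)) := by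
      rw [pow_succ' B, pow_succ' Bh, ContinuousLinearMap.mul_apply,
        ContinuousLinearMap.mul_apply, map_smul, map_sub, smul_smul,
        ← pow_succ' α]
      rw [smul_sub, smul_sub, smul_sub]
      abel
    rw [dec]
    have t2 : ‖α • Bh (α ^ k • ((B ^ k) w - (Bh ^ k) w))‖ ≤ (k : ℝ) * (‖Th - T‖ * ‖w‖) / s :=
      (bnd1 hα hBh₂ _).trans (ih w)
    have hdiff := diffId hB₂ hBh₁ p
    have tA : ‖α ^ (k + 1) • Bh (adjoint Th ((Th - T) (B p)))‖ ≤ ‖Th - T‖ * ‖w‖ / (2 * s) := by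
      have e : α ^ (k + 1) • Bh (adjoint Th ((Th - T) (B p))) =
          Bh (adjoint Th ((Th - T) (α ^ (k + 1) • (B ^ (k + 1)) w))) := by
        rw [map_smul, map_smul, map_smul, pow_succ' B, ContinuousLinearMap.mul_apply]
      rw [e]
      refine (bnd2 hα hBh₂ _).trans ?_
      have : ‖(Th - T) (α ^ (k + 1) • (B ^ (k + 1)) w)‖ ≤ ‖Th - T‖ * ‖w‖ :=
        ((Th - T).le_opNorm _).trans (by
          have := powB hα hB₂ (k + 1) w
          exact mul_le_mul_of_nonneg_left this (norm_nonneg _))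
      exact div_le_div_of_nonneg_right this (by positivity) |>.trans (le_refl _) |>.trans (le_refl _)
    have tB : ‖α ^ (k + 1) • Bh ((adjoint (Th - T)) (T (B p)))‖ ≤ ‖Th - T‖ * ‖w‖ / (2 * s) := by
      have e : α ^ (k + 1) • Bh ((adjoint (Th - T)) (T (B p))) =
          α • Bh ((adjoint (Th - T)) (T (B (α ^ k • p)))) := by
        rw [map_smul, map_smul, map_smul, map_smul, smul_smul, ← pow_succ' α]
      rw [e]
      refine (bnd1 hα hBh₂ _).trans ?_
      refine ((adjoint (Th - T)).le_opNorm _).trans ?_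
      rw [myadj_norm]
      have h3 : ‖T (B (α ^ k • p))‖ ≤ ‖α ^ k • p‖ / (2 * s) := bnd3 hα hB₂ _
      have h4 : ‖α ^ k • p‖ ≤ ‖w‖ := powB hα hB₂ k w
      calc ‖Th - T‖ * ‖T (B (α ^ k • p))‖ ≤ ‖Th - T‖ * (‖w‖ / (2 * s)) := by
            refine mul_le_mul_of_nonneg_left (h3.trans ?_) (norm_nonneg _)
            exact div_le_div_of_nonneg_right h4 (by positivity)
        _ = ‖Th - T‖ * ‖w‖ / (2 * s) := by ring
    calc ‖α ^ (k + 1) • (B p - Bh p) + α • Bh (α ^ k • ((B ^ k) w - (Bh ^ k) w))‖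
        ≤ ‖α ^ (k + 1) • (B p - Bh p)‖ + ‖α • Bh (α ^ k • ((B ^ k) w - (Bh ^ k) w))‖ :=
          norm_add_le _ _
      _ ≤ (‖Th - T‖ * ‖w‖ / (2 * s) + ‖Th - T‖ * ‖w‖ / (2 * s)) +
            (k : ℝ) * (‖Th - T‖ * ‖w‖) / s := by
          refine add_le_add ?_ t2
          rw [hdiff, smul_add]
          exact (norm_add_le _ _).trans (add_le_add tA tB)
      _ = ((k : ℕ) + 1 : ℝ) * (‖Th - T‖ * ‖w‖) / s := by
          field_simp
          ring
      _ = ((k + 1 : ℕ) : ℝ) * (‖Th - T‖ * ‖w‖) / s := by push_cast; ring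

lemma adjProj (T : X →L[ℝ] Y) (w : Y) :
    adjoint T w = adjoint T
      (((LinearMap.range (T : X →ₗ[ℝ] Y)).topologicalClosure.subtypeL ∘L
        Submodule.orthogonalProjectionOnto (LinearMap.range (T : X →ₗ[ℝ] Y)).topologicalClosure) w) := by
  set K := (LinearMap.range (T : X →ₗ[ℝ] Y)).topologicalClosure with hK
  have h1 : w - (K.subtypeL ∘L K.orthogonalProjectionOnto) w ∈ Kᗮ := by
    exact Submodule.sub_starProjection_mem_orthogonal (K := K) w
  have h2 : adjoint T (w - (K.subtypeL ∘L K.orthogonalProjectionOnto) w) = 0 := by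
    refine ext_inner_right ℝ fun v => ?_
    rw [adjoint_inner_left, inner_zero_left]
    have hTv : T v ∈ K := Submodule.le_topologicalClosure _ (LinearMap.mem_range_self _ v)
    rw [real_inner_comm]
    exact (Submodule.mem_orthogonal K _).mp h1 (T v) hTv
  have := map_sub (adjoint T) w ((K.subtypeL ∘L K.orthogonalProjectionOnto) w)
  rw [h2] at this
  exact (sub_eq_zero.mp this.symm)


lemma myGaussSum (n : ℕ) : ∑ k ∈ Finset.range n, ((k : ℝ) + 1) = n * (n + 1) / 2 := by
  induction n with
  | zero => simp
  | succ n ih => rw [Finset.sum_range_succ, ih]; push_cast; ring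

end Aux

set_option maxHeartbeats 2000000 in
open ContinuousLinearMap in
/-- Lemma A.1 of the paper: for bounded operators `T, Tₕ : X → Y` between Hilbert spaces,
with `Q` and `Qₕ` the orthogonal projections onto the closures of `Range T` and
`Range Tₕ`, and `x†` satisfying `T x† = Q y`, the iterated Tikhonov approximations built
from `T` and `Tₕ` satisfy
`‖x_{α,i} − x_{α,i}ʰ‖ ≤ i(i+1)‖T−Tₕ‖‖x†‖/(2√α) + i‖Qₕ(I−Q)y‖/(2√α)`. -/
theorem iterated_tikhonov_operator_perturbation_bound
    {X Y : Type*} [NormedAddCommGroup X] [InnerProductSpace ℝ X] [CompleteSpace X]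
    [NormedAddCommGroup Y] [InnerProductSpace ℝ Y] [CompleteSpace Y]
    (T Th : X →L[ℝ] Y) (α : ℝ) (hα : 0 < α) (i : ℕ) (hi : 1 ≤ i)
    (y : Y) (xdag : X)
    (Q Qh : Y →L[ℝ] Y)
    (hQ : Q = (LinearMap.range (T : X →ₗ[ℝ] Y)).topologicalClosure.subtypeL ∘L
      Submodule.orthogonalProjectionOnto (LinearMap.range (T : X →ₗ[ℝ] Y)).topologicalClosure)
    (hQh : Qh = (LinearMap.range (Th : X →ₗ[ℝ] Y)).topologicalClosure.subtypeL ∘L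
      Submodule.orthogonalProjectionOnto (LinearMap.range (Th : X →ₗ[ℝ] Y)).topologicalClosure)
    (hxdag : T xdag = Q y)
    (B Bh : X →L[ℝ] X)
    (hB₁ : B * (adjoint T ∘L T + α • 1) = 1)
    (hB₂ : (adjoint T ∘L T + α • 1) * B = 1)
    (hBh₁ : Bh * (adjoint Th ∘L Th + α • 1) = 1)
    (hBh₂ : (adjoint Th ∘L Th + α • 1) * Bh = 1) :
    ‖(∑ k ∈ Finset.range i, α ^ k • (B ^ (k + 1)) (adjoint T y)) -
      ∑ k ∈ Finset.range i, α ^ k • (Bh ^ (k + 1)) (adjoint Th y)‖ ≤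
      (i : ℝ) * (i + 1) * ‖T - Th‖ * ‖xdag‖ / (2 * Real.sqrt α) +
        (i : ℝ) * ‖Qh ((1 - Q) y)‖ / (2 * Real.sqrt α) := by
  set s := Real.sqrt α with hs
  have hs0 : 0 < s := Real.sqrt_pos.mpr hα
  set z := Qh ((1 - Q) y) with hz
  set c := ‖T - Th‖ * ‖xdag‖ with hc
  have hc0 : 0 ≤ c := by positivity
  -- key vector facts
  have hTy : adjoint T y = adjoint T (T xdag) := by
    calc adjoint T y = adjoint T (Q y) := by rw [hQ]; exact adjProj T y
      _ = adjoint T (T xdag) := by rw [hxdag]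
  have hThy : adjoint Th y = adjoint Th (T xdag) + adjoint Th z := by
    have h1 : (1 - Q) y = y - Q y := by
      simp [ContinuousLinearMap.sub_apply]
    have h2 : adjoint Th (y - Q y) = adjoint Th (Qh (y - Q y)) := by
      rw [hQh]; exact adjProj Th (y - Q y)
    calc adjoint Th y = adjoint Th (Q y) + adjoint Th (y - Q y) := by
          rw [← map_add]; congr 1; abel
      _ = adjoint Th (Q y) + adjoint Th (Qh (y - Q y)) := by rw [← h2]
      _ = adjoint Th (T xdag) + adjoint Th z := by rw [hz, h1, hxdag]
  set u := B xdag with hudef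
  set v := B (adjoint T (T xdag)) with hvdef
  have hxv : v + α • u = xdag := ptB hB₁ xdag
  have hu : adjoint T (T u) = v := by
    have e := ptA hB₂ xdag
    exact (eq_sub_of_add_eq e).trans (eq_sub_of_add_eq hxv).symm
  -- the identity for h := v - Bh (adjoint Th (T xdag))
  have e5 := ptB hBh₁ v
  have e6 : adjoint Th (T xdag) = adjoint Th (T v) + α • adjoint Th (T u) := by
    rw [← hxv]
    simp [map_add, map_smul]
  have hId : v - Bh (adjoint Th (T xdag)) =
      Bh (adjoint Th ((Th - T) v)) - α • Bh ((adjoint (Th - T)) (T u)) := by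
    have hsub : adjoint (Th - T) = adjoint Th - adjoint T := map_sub _ _ _
    rw [e6]
    simp only [hsub, ContinuousLinearMap.sub_apply, map_sub, map_add, map_smul, smul_sub, hu]
    set a1 := Bh (adjoint Th (Th v)) with ha1
    set a2 := Bh (adjoint Th (T v)) with ha2
    set a3 := Bh (adjoint Th (T u)) with ha3
    set a4 := Bh v with ha4
    rw [← e5]
    abel
  have hbound : ‖v - Bh (adjoint Th (T xdag))‖ ≤ c / s := by
    rw [hId]
    have t1 : ‖Bh (adjoint Th ((Th - T) v))‖ ≤ c / (2 * s) := by
      refine (bnd2 hα hBh₂ _).trans ?_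
      have hv1 : ‖v‖ ≤ ‖xdag‖ := bnd4 hα hB₁ hB₂ xdag
      have : ‖(Th - T) v‖ ≤ ‖T - Th‖ * ‖xdag‖ := by
        refine ((Th - T).le_opNorm v).trans ?_
        rw [norm_sub_rev]
        exact mul_le_mul_of_nonneg_left hv1 (norm_nonneg _)
      exact div_le_div_of_nonneg_right this (by positivity)
    have t2 : ‖α • Bh ((adjoint (Th - T)) (T u))‖ ≤ c / (2 * s) := by
      refine (bnd1 hα hBh₂ _).trans ?_
      refine ((adjoint (Th - T)).le_opNorm _).trans ?_
      rw [myadj_norm, norm_sub_rev]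
      have h3 : ‖T u‖ ≤ ‖xdag‖ / (2 * s) := bnd3 hα hB₂ xdag
      calc ‖T - Th‖ * ‖T u‖ ≤ ‖T - Th‖ * (‖xdag‖ / (2 * s)) :=
            mul_le_mul_of_nonneg_left h3 (norm_nonneg _)
        _ = c / (2 * s) := by rw [hc]; ring
    calc ‖Bh (adjoint Th ((Th - T) v)) - α • Bh ((adjoint (Th - T)) (T u))‖
        ≤ ‖Bh (adjoint Th ((Th - T) v))‖ + ‖α • Bh ((adjoint (Th - T)) (T u))‖ :=
          norm_sub_le _ _
      _ ≤ c / (2 * s) + c / (2 * s) := add_le_add t1 t2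
      _ = c / s := by field_simp; ring
  -- per-index bound
  have perk : ∀ k : ℕ, ‖α ^ k • (B ^ (k + 1)) (adjoint T y) -
      α ^ k • (Bh ^ (k + 1)) (adjoint Th y)‖ ≤
      ((k : ℝ) + 1) * c / s + ‖z‖ / (2 * s) := by
    intro k
    have dec : α ^ k • (B ^ (k + 1)) (adjoint T y) -
        α ^ k • (Bh ^ (k + 1)) (adjoint Th y) =
        α ^ k • ((B ^ k) v - (Bh ^ k) v)
          + α ^ k • (Bh ^ k) (v - Bh (adjoint Th (T xdag)))
          - α ^ k • (Bh ^ k) (Bh (adjoint Th z)) := by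
      rw [pow_succ B, pow_succ Bh, ContinuousLinearMap.mul_apply,
        ContinuousLinearMap.mul_apply, hTy, hThy]
      simp only [map_add, map_sub, smul_sub, smul_add, ← hvdef]
      abel
    rw [dec]
    have t1 : ‖α ^ k • ((B ^ k) v - (Bh ^ k) v)‖ ≤ (k : ℝ) * c / s := by
      refine (E1 hα hB₂ hBh₁ hBh₂ k v).trans ?_
      have hv1 : ‖v‖ ≤ ‖xdag‖ := bnd4 hα hB₁ hB₂ xdag
      have : ‖Th - T‖ * ‖v‖ ≤ c := by
        rw [hc, norm_sub_rev]
        exact mul_le_mul_of_nonneg_left hv1 (norm_nonneg _)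
      refine div_le_div_of_nonneg_right ?_ hs0.le
      exact mul_le_mul_of_nonneg_left this (Nat.cast_nonneg k)
    have t2 : ‖α ^ k • (Bh ^ k) (v - Bh (adjoint Th (T xdag)))‖ ≤ c / s :=
      (powB hα hBh₂ k _).trans hbound
    have t3 : ‖α ^ k • (Bh ^ k) (Bh (adjoint Th z))‖ ≤ ‖z‖ / (2 * s) :=
      (powB hα hBh₂ k _).trans (bnd2 hα hBh₂ z)
    calc ‖α ^ k • ((B ^ k) v - (Bh ^ k) v)
          + α ^ k • (Bh ^ k) (v - Bh (adjoint Th (T xdag)))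
          - α ^ k • (Bh ^ k) (Bh (adjoint Th z))‖
        ≤ ‖α ^ k • ((B ^ k) v - (Bh ^ k) v)
            + α ^ k • (Bh ^ k) (v - Bh (adjoint Th (T xdag)))‖
          + ‖α ^ k • (Bh ^ k) (Bh (adjoint Th z))‖ := norm_sub_le _ _
      _ ≤ (‖α ^ k • ((B ^ k) v - (Bh ^ k) v)‖
            + ‖α ^ k • (Bh ^ k) (v - Bh (adjoint Th (T xdag)))‖)
          + ‖α ^ k • (Bh ^ k) (Bh (adjoint Th z))‖ :=
            add_le_add_left (norm_add_le _ _) _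
      _ ≤ ((k : ℝ) * c / s + c / s) + ‖z‖ / (2 * s) :=
            add_le_add (add_le_add t1 t2) t3
      _ = ((k : ℝ) + 1) * c / s + ‖z‖ / (2 * s) := by ring
  rw [← Finset.sum_sub_distrib]
  refine (norm_sum_le _ _).trans ?_
  refine (Finset.sum_le_sum fun k _ => perk k).trans ?_
  rw [Finset.sum_add_distrib, Finset.sum_const, Finset.card_range]
  have hg : ∑ k ∈ Finset.range i, (((k : ℝ) + 1) * c / s) = (i * (i + 1) / 2) * (c / s) := by
    rw [← Finset.sum_div, ← Finset.sum_mul, myGaussSum]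
    ring
  rw [hg, nsmul_eq_mul]
  have : (i : ℝ) * (i + 1) * ‖T - Th‖ * ‖xdag‖ / (2 * s) = (i * (i + 1) / 2) * (c / s) := by
    rw [hc]; field_simp
  rw [this]
  have : (i : ℝ) * ‖z‖ / (2 * s) = (i : ℝ) * (‖z‖ / (2 * s)) := by ring
  rw [this]
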